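/- Let α ∈ (0,∞) and q ∈ [1,∞). Then there exists a constant c ∈ (0,∞) such that for all δ ∈ (0,δ₀] and all t ∈ [0,1] one has P(|X̂^δ_{t̲^δ} − X̂^δ_t| ≥ α·ε₂^δ and X̂^δ_{t̲^δ} ∈ Θ^{ε₂^δ}) ≤ c·δ^q. (Lemma 5.5(i).) -/

import Mathlib

open MeasureTheory ProbabilityTheory Filter Set
open scoped ENNReal NNReal

noncomputable section

namespace AdaptiveQM

/-- The open interval `(ξ_{i-1}, ξ_i)` (with `ξ₀ = -∞`, `ξ_{k+1} = ∞`) determined by the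
strictly increasing family `ξ : Fin k → ℝ`. -/
def piece {k : ℕ} (ξ : Fin k → ℝ) (i : Fin (k + 1)) : Set ℝ :=
  {x | (∀ j : Fin k, (j : ℕ) < (i : ℕ) → ξ j < x) ∧ ∀ j : Fin k, (i : ℕ) ≤ (j : ℕ) → x < ξ j}

/-- Assumption (μ1)/(σ piecewise Lipschitz): Lipschitz continuity on each interval
`(ξ_{i-1}, ξ_i)`. -/
def PiecewiseLipschitz {k : ℕ} (ξ : Fin k → ℝ) (f : ℝ → ℝ) : Prop :=
  ∀ i : Fin (k + 1), ∃ L : ℝ≥0, LipschitzOnWith L f (piece ξ i)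

/-- Assumptions (μ2)/(σ2): `f` has a Lipschitz continuous derivative on each interval
`(ξ_{i-1}, ξ_i)`. -/
def PiecewiseC1Lipschitz {k : ℕ} (ξ : Fin k → ℝ) (f : ℝ → ℝ) : Prop :=
  ∀ i : Fin (k + 1), ∃ (f' : ℝ → ℝ) (L : ℝ≥0),
    (∀ x ∈ piece ξ i, HasDerivAt f (f' x) x) ∧ LipschitzOnWith L f' (piece ξ i)

/-- `W` is a one-dimensional Brownian motion on `(Ω, F, P)`. -/
structure IsBrownianMotion {Ω : Type*} [MeasurableSpace Ω] (P : Measure Ω)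
    (W : ℝ → Ω → ℝ) : Prop where
  meas : ∀ t, Measurable (W t)
  init : ∀ᵐ ω ∂P, W 0 ω = 0
  cont : ∀ᵐ ω ∂P, Continuous fun t => W t ω
  gauss : ∀ s t : ℝ, 0 ≤ s → s ≤ t →
    P.map (fun ω => W t ω - W s ω) = gaussianReal 0 (Real.toNNReal (t - s))
  indep : ∀ (n : ℕ) (t : Fin (n + 1) → ℝ), Monotone t → (∀ i, 0 ≤ t i) →
    iIndepFun
      (fun (i : Fin n) ω => W (t i.succ) ω - W (t i.castSucc) ω) P

/-- `ε₁^δ = √δ · log²(1/δ)`. -/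
def eps1 (δ : ℝ) : ℝ := Real.sqrt δ * (Real.log (1 / δ)) ^ 2

/-- `ε₂^δ = δ · log⁴(1/δ)`. -/
def eps2 (δ : ℝ) : ℝ := δ * (Real.log (1 / δ)) ^ 4

/-- The adaptive step-size function `h^δ`. -/
def stepSize (Θ : Set ℝ) (δ x : ℝ) : ℝ :=
  if Metric.infDist x Θ < eps2 δ then δ ^ 2 * (Real.log (1 / δ)) ^ 4
  else if Metric.infDist x Θ < eps1 δ then (Metric.infDist x Θ / (Real.log (1 / δ)) ^ 2) ^ 2
  else δ

/-- One quasi-Milstein step: value at time `t` started from value `y` at time `u`, driven by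
the path `w`.  Note `deriv s y = s'(y)` if `s` is differentiable at `y` and `0` otherwise. -/
def milsteinStep (b s : ℝ → ℝ) (y u t : ℝ) (w : ℝ → ℝ) : ℝ :=
  y + b y * (t - u) + s y * (w t - w u)
    + (1 / 2) * (s y * deriv s y) * ((w t - w u) ^ 2 - (t - u))

variable {Ω : Type*}

/-- The grid of the adaptive quasi-Milstein scheme: `grid b s Θ x₀ W δ i ω = (τ_i^δ(ω), X̂^δ_{τ_i^δ}(ω))`. -/
def grid (b s : ℝ → ℝ) (Θ : Set ℝ) (x₀ : ℝ) (W : ℝ → Ω → ℝ) (δ : ℝ) :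
    ℕ → Ω → ℝ × ℝ
  | 0 => fun _ => (0, x₀)
  | i + 1 => fun ω =>
      let p := grid b s Θ x₀ W δ i ω
      let t' := p.1 + stepSize Θ δ p.2
      (t', milsteinStep b s p.2 p.1 t' fun u => W u ω)

/-- `τ_i^δ`. -/
def gridTime (b s : ℝ → ℝ) (Θ : Set ℝ) (x₀ : ℝ) (W : ℝ → Ω → ℝ) (δ : ℝ) (i : ℕ) (ω : Ω) : ℝ :=
  (grid b s Θ x₀ W δ i ω).1

/-- `X̂^δ_{τ_i^δ}`. -/
def gridVal (b s : ℝ → ℝ) (Θ : Set ℝ) (x₀ : ℝ) (W : ℝ → Ω → ℝ) (δ : ℝ) (i : ℕ) (ω : Ω) : ℝ :=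
  (grid b s Θ x₀ W δ i ω).2

/-- The largest index `i` with `τ_i^δ ≤ t`. -/
def lastIdx (b s : ℝ → ℝ) (Θ : Set ℝ) (x₀ : ℝ) (W : ℝ → Ω → ℝ) (δ t : ℝ) (ω : Ω) : ℕ :=
  sSup {i : ℕ | gridTime b s Θ x₀ W δ i ω ≤ t}

/-- `t̲^δ = max{τ_i^δ : τ_i^δ ≤ t}`. -/
def lastTime (b s : ℝ → ℝ) (Θ : Set ℝ) (x₀ : ℝ) (W : ℝ → Ω → ℝ) (δ t : ℝ) (ω : Ω) : ℝ :=
  gridTime b s Θ x₀ W δ (lastIdx b s Θ x₀ W δ t ω) ω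

/-- `X̂^δ_{t̲^δ}`. -/
def lastVal (b s : ℝ → ℝ) (Θ : Set ℝ) (x₀ : ℝ) (W : ℝ → Ω → ℝ) (δ t : ℝ) (ω : Ω) : ℝ :=
  gridVal b s Θ x₀ W δ (lastIdx b s Θ x₀ W δ t ω) ω

/-- The time-continuous adaptive quasi-Milstein scheme `X̂^δ_t`. -/
def scheme (b s : ℝ → ℝ) (Θ : Set ℝ) (x₀ : ℝ) (W : ℝ → Ω → ℝ) (δ t : ℝ) (ω : Ω) : ℝ :=
  milsteinStep b s (lastVal b s Θ x₀ W δ t ω) (lastTime b s Θ x₀ W δ t ω) t fun u => W u ω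

/-- `N(X̂^δ_1) = min{i ∈ ℕ : τ_i^δ ≥ 1}`, the number of evaluations of `W`. -/
def numSteps (b s : ℝ → ℝ) (Θ : Set ℝ) (x₀ : ℝ) (W : ℝ → Ω → ℝ) (δ : ℝ) (ω : Ω) : ℕ :=
  sInf {i : ℕ | 1 ≤ gridTime b s Θ x₀ W δ i ω}

/-- The augmented filtration `F_t = σ(σ(W_s : 0 ≤ s ≤ t) ∪ N)` generated by `W`. -/
def augFilt [MeasurableSpace Ω] (P : Measure Ω) (W : ℝ → Ω → ℝ) (t : ℝ) :
    MeasurableSpace Ω :=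
  (⨆ s ∈ Set.Icc (0 : ℝ) t, MeasurableSpace.comap (W s) inferInstance) ⊔
    MeasurableSpace.generateFrom {A | MeasurableSet A ∧ P A = 0}

/-- `τ` is a stopping time with respect to the augmented Brownian filtration. -/
def IsAugStoppingTime [MeasurableSpace Ω] (P : Measure Ω) (W : ℝ → Ω → ℝ) (τ : Ω → ℝ) :
    Prop :=
  ∀ t : ℝ, MeasurableSet[augFilt P W t] {ω | τ ω ≤ t}

/-- The σ-algebra `F_τ` of the `τ`-past. -/
def stoppedSigma [MeasurableSpace Ω] (P : Measure Ω) (W : ℝ → Ω → ℝ) (τ : Ω → ℝ) :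
    MeasurableSpace Ω :=
  MeasurableSpace.generateFrom
    {A | MeasurableSet A ∧ ∀ t : ℝ, MeasurableSet[augFilt P W t] (A ∩ {ω | τ ω ≤ t})}

/-- The shifted process `W^τ_t = W_{τ+t} - W_τ`. -/
def shiftedBM (W : ℝ → Ω → ℝ) (τ : Ω → ℝ) : ℝ → Ω → ℝ :=
  fun t ω => W (τ ω + t) ω - W (τ ω) ω

/-- Left-point Riemann sums for the Itô integral `∫₀ᵗ H dW` along dyadic partitions. -/
def riemannSum (H : ℝ → Ω → ℝ) (W : ℝ → Ω → ℝ) (t : ℝ) (n : ℕ) (ω : Ω) : ℝ :=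
  ∑ i ∈ Finset.range (2 ^ n),
    H (t * i / 2 ^ n) ω * (W (t * (i + 1) / 2 ^ n) ω - W (t * i / 2 ^ n) ω)

/-- `X` is a strong solution of `dX_t = b(X_t) dt + s(X_t) dW_t`, `X₀ = x₀`: it is adapted to
the Brownian motion, has continuous paths, and satisfies the integral equation, the stochastic
integral being the limit in probability of left-point Riemann sums. -/
def IsStrongSolution [MeasurableSpace Ω] (P : Measure Ω) (W : ℝ → Ω → ℝ)
    (b s : ℝ → ℝ) (x₀ : ℝ) (X : ℝ → Ω → ℝ) : Prop :=
  (∀ t, Measurable (X t)) ∧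
  (∀ᵐ ω ∂P, Continuous fun t => X t ω) ∧
  (∀ᵐ ω ∂P, X 0 ω = x₀) ∧
  (∀ t : ℝ, 0 ≤ t → ∃ g : (ℝ → ℝ) → ℝ, Measurable g ∧
    ∀ᵐ ω ∂P, X t ω = g fun u => W (min u t) ω) ∧
  (∀ t : ℝ, 0 ≤ t →
    TendstoInMeasure P (fun n ω => riemannSum (fun u ω' => s (X u ω')) W t n ω) atTop
      fun ω => X t ω - x₀ - ∫ u in (0 : ℝ)..t, b (X u ω))

/-- The bump function `φ(x) = (1-x²)⁴ · 1_{[-1,1]}(x)`. -/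
def phiBump (x : ℝ) : ℝ := if x ∈ Set.Icc (-1 : ℝ) 1 then (1 - x ^ 2) ^ 4 else 0

/-- `ρ_{z,α}`, with the convention `1/0 = ∞`. -/
def rho {k : ℕ} (z α : Fin k → ℝ) : ℝ≥0∞ :=
  (⨅ i : Fin k, if α i = 0 then ⊤ else ENNReal.ofReal (1 / (8 * |α i|))) ⊓
    ⨅ i : Fin k, ⨅ j : Fin k,
      if (i : ℕ) + 1 = (j : ℕ) then ENNReal.ofReal ((z j - z i) / 2) else ⊤

/-- The transformation `G_{z,α,ν}`. -/
def Gmap {k : ℕ} (z α : Fin k → ℝ) (ν : ℝ) (x : ℝ) : ℝ :=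
  x + ∑ i : Fin k, α i * (x - z i) * |x - z i| * phiBump ((x - z i) / ν)

/-- The inverse `G_{z,α,ν}^{-1}`. -/
def Ginv {k : ℕ} (z α : Fin k → ℝ) (ν : ℝ) : ℝ → ℝ := Function.invFun (Gmap z α ν)

/-- `α_i = (μ(ξ_i-) - μ(ξ_i+)) / (2σ²(ξ_i))`. -/
def alphaCoef (b s : ℝ → ℝ) {k : ℕ} (ξ : Fin k → ℝ) (i : Fin k) : ℝ :=
  (Function.leftLim b (ξ i) - Function.rightLim b (ξ i)) / (2 * (s (ξ i)) ^ 2)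

open Classical in
/-- `G''_{ξ,α,ν}` extended to all of `ℝ` by
`G''(ξ_i) = 2α_i + 2(μ(ξ_i+) - μ(ξ_i))/σ²(ξ_i)`. -/
def GsecondExt (b s : ℝ → ℝ) {k : ℕ} (ξ : Fin k → ℝ) (ν : ℝ) (x : ℝ) : ℝ :=
  if h : ∃ i, ξ i = x then
    2 * alphaCoef b s ξ h.choose + 2 * (Function.rightLim b x - b x) / (s x) ^ 2
  else deriv (deriv (Gmap ξ (alphaCoef b s ξ) ν)) x

/-- The transformed drift `μ̃ = (G'·μ + ½G''·σ²) ∘ G⁻¹`. -/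
def tildeDrift (b s : ℝ → ℝ) {k : ℕ} (ξ : Fin k → ℝ) (ν : ℝ) (x : ℝ) : ℝ :=
  deriv (Gmap ξ (alphaCoef b s ξ) ν) (Ginv ξ (alphaCoef b s ξ) ν x) *
      b (Ginv ξ (alphaCoef b s ξ) ν x) +
    (1 / 2) * GsecondExt b s ξ ν (Ginv ξ (alphaCoef b s ξ) ν x) *
      (s (Ginv ξ (alphaCoef b s ξ) ν x)) ^ 2

/-- The transformed diffusion coefficient `σ̃ = (G'·σ) ∘ G⁻¹`. -/
def tildeDiff (b s : ℝ → ℝ) {k : ℕ} (ξ : Fin k → ℝ) (ν : ℝ) (x : ℝ) : ℝ :=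
  deriv (Gmap ξ (alphaCoef b s ξ) ν) (Ginv ξ (alphaCoef b s ξ) ν x) *
    s (Ginv ξ (alphaCoef b s ξ) ν x)

/-- The set `S = (⋃ᵢ (ξ_{i-1},ξ_i)²)ᶜ ⊆ ℝ²`. -/
def badSet {k : ℕ} (ξ : Fin k → ℝ) : Set (ℝ × ℝ) :=
  (⋃ i : Fin (k + 1), (piece ξ i) ×ˢ (piece ξ i))ᶜ

section Chaining
open Real

noncomputable def qpt (a ℓ : ℝ) (n j : ℕ) : ℝ := a + ℓ * j / 2^n

lemma qpt_last (a ℓ : ℝ) (n : ℕ) : qpt a ℓ n (2^n) = a + ℓ := by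
  rw [qpt]
  have h2 : ((2:ℝ))^n ≠ 0 := by positivity
  push_cast
  field_simp

lemma qpt_double (a ℓ : ℝ) (n m : ℕ) : qpt a ℓ (n+1) (2*m) = qpt a ℓ n m := by
  rw [qpt, qpt, pow_succ]
  have h2 : ((2:ℝ))^n ≠ 0 := by positivity
  push_cast
  field_simp

lemma sum_geom_34 (r : ℝ) (hr : 0 ≤ r) (N : ℕ) :
    ∑ m ∈ Finset.range N, r/8*(3/4)^m ≤ r/2 := by
  rw [← Finset.mul_sum]
  have h1 : ∑ m ∈ Finset.range N, (3/4:ℝ)^m = ((3/4:ℝ)^N - 1)/((3/4) - 1) :=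
    geom_sum_eq (by norm_num) N
  have h2 : (0:ℝ) ≤ (3/4:ℝ)^N := by positivity
  have h3 : (3/4:ℝ)^N ≤ 1 := pow_le_one₀ (by norm_num) (by norm_num)
  rw [h1]
  rw [show ((3/4:ℝ)^N - 1)/((3/4) - 1) = 4*(1 - (3/4:ℝ)^N) by ring]
  nlinarith

lemma chain_dyadic {w : ℝ → ℝ} {a t r : ℝ} (hat : a ≤ t)
    (hinc : ∀ n : ℕ, ∀ j < 2^n, |w (qpt a (t-a) n (j+1)) - w (qpt a (t-a) n j)| < r/8 * (3/4)^n) :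
    ∀ n : ℕ, ∀ j ≤ 2^n, |w t - w (qpt a (t-a) n j)| ≤ ∑ m ∈ Finset.range (n+1), r/8*(3/4)^m := by
  intro n
  induction n with
  | zero =>
    intro j hj
    interval_cases j
    · have h1 := hinc 0 0 (by norm_num)
      have h2 : qpt a (t-a) 0 1 = t := by
        have := qpt_last a (t-a) 0
        simpa using this
      rw [h2] at h1
      simpa using h1.le
    · have h2 : qpt a (t-a) 0 1 = t := by
        have := qpt_last a (t-a) 0
        simpa using this
      rw [h2]
      have hrpos : (0:ℝ) < r/8 := lt_of_le_of_lt (abs_nonneg _) (by simpa using hinc 0 0 (by norm_num))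
      simp only [sub_self, abs_zero]
      apply Finset.sum_nonneg
      intro m _
      positivity
  | succ n ih =>
    intro j hj
    have hsum : ∑ m ∈ Finset.range (n+1+1), r/8*(3/4)^m
        = (∑ m ∈ Finset.range (n+1), r/8*(3/4)^m) + r/8*(3/4)^(n+1) :=
      Finset.sum_range_succ _ _
    have hrn : (0:ℝ) ≤ r/8*(3/4)^(n+1) := by
      rcases le_or_gt 0 r with h | h
      · positivity
      · exfalso
        have := hinc 0 0 (by norm_num)
        have habs : (0:ℝ) ≤ |w (qpt a (t-a) 0 1) - w (qpt a (t-a) 0 0)| := abs_nonneg _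
        nlinarith
    rcases Nat.even_or_odd j with ⟨m, hm⟩ | ⟨m, hm⟩
    · have hj' : m ≤ 2^n := by subst hm; rw [pow_succ] at hj; omega
      have : j = 2*m := by omega
      subst this
      rw [qpt_double]
      calc |w t - w (qpt a (t-a) n m)| ≤ ∑ m ∈ Finset.range (n+1), r/8*(3/4)^m := ih m hj'
        _ ≤ _ := by rw [hsum]; linarith
    · subst hm
      have hjlt : 2*m+1 < 2^(n+1) := by
        rcases Nat.lt_or_ge (2*m+1) (2^(n+1)) with h | h
        · exact h
        · exfalso
          have : 2*m+1 = 2^(n+1) := le_antisymm hj h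
          rw [pow_succ] at this
          omega
      have hm1 : m + 1 ≤ 2^n := by rw [pow_succ] at hjlt; omega
      have htri : |w t - w (qpt a (t-a) (n+1) (2*m+1))|
          ≤ |w t - w (qpt a (t-a) (n+1) (2*m+2))|
            + |w (qpt a (t-a) (n+1) (2*m+2)) - w (qpt a (t-a) (n+1) (2*m+1))| :=
        abs_sub_le _ _ _
      have h2m2 : qpt a (t-a) (n+1) (2*m+2) = qpt a (t-a) n (m+1) := by
        rw [show 2*m+2 = 2*(m+1) by ring, qpt_double]
      have hi := hinc (n+1) (2*m+1) hjlt
      calc |w t - w (qpt a (t-a) (n+1) (2*m+1))|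
          ≤ |w t - w (qpt a (t-a) n (m+1))| + r/8*(3/4)^(n+1) := by
            rw [← h2m2]
            have := hi.le
            rw [show 2*m+1+1 = 2*m+2 by ring] at this
            linarith [htri]
        _ ≤ _ := by rw [hsum]; linarith [ih (m+1) hm1]

lemma chain_cont {w : ℝ → ℝ} (hw : Continuous w) {a t r : ℝ} (hat : a ≤ t) (hr : 0 ≤ r)
    (hinc : ∀ n : ℕ, ∀ j < 2^n, |w (qpt a (t-a) n (j+1)) - w (qpt a (t-a) n j)| < r/8 * (3/4)^n) :
    ∀ v ∈ Set.Icc a t, |w t - w v| ≤ r/2 := by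
  intro v hv
  rcases eq_or_lt_of_le hat with he | hlt
  · have hvt : v = t := le_antisymm hv.2 (he ▸ hv.1)
    subst hvt
    simp only [sub_self, abs_zero]
    linarith
  · have hℓpos : 0 < t - a := by linarith
    set ℓ := t - a with hℓdef
    set x := (v - a)/ℓ with hxdef
    have hx0 : 0 ≤ x := div_nonneg (by linarith [hv.1]) hℓpos.le
    have hx1 : x ≤ 1 := by
      rw [hxdef, div_le_one hℓpos]
      linarith [hv.2]
    have hvax : v = a + ℓ * x := by
      rw [hxdef]
      field_simp
      ring
    set J : ℕ → ℕ := fun n => ⌈(2:ℝ)^n * x⌉₊ with hJdef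
    have hJle : ∀ n, J n ≤ 2^n := by
      intro n
      rw [hJdef]
      apply Nat.ceil_le.2
      push_cast
      nlinarith [pow_pos (show (0:ℝ) < 2 by norm_num) n]
    have hdist : ∀ n, |qpt a ℓ n (J n) - v| ≤ ℓ * (1/2)^n := by
      intro n
      have h2n : (0:ℝ) < 2^n := by positivity
      have hle : (2:ℝ)^n * x ≤ (J n : ℝ) := Nat.le_ceil _
      have hlt' : (J n : ℝ) < 2^n * x + 1 := by
        rw [hJdef]
        exact Nat.ceil_lt_add_one (by positivity)
      have heq : qpt a ℓ n (J n) - v = ℓ * ((J n : ℝ) - 2^n * x)/2^n := by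
        rw [qpt, hvax]
        field_simp
        ring
      rw [heq, abs_of_nonneg (div_nonneg (mul_nonneg hℓpos.le (by linarith)) h2n.le)]
      rw [div_le_iff₀ h2n]
      have : ℓ * (1/2:ℝ)^n * 2^n = ℓ := by
        field_simp
        rw [← mul_pow]; norm_num
      rw [this]
      nlinarith
    have hq : Filter.Tendsto (fun n => qpt a ℓ n (J n)) Filter.atTop (nhds v) := by
      rw [tendsto_iff_dist_tendsto_zero]
      refine squeeze_zero (g := fun n => ℓ * (1/2)^n) (fun n => dist_nonneg)
        (fun n => by rw [Real.dist_eq]; exact hdist n) ?_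
      have h0 : Filter.Tendsto (fun n : ℕ => (1/2:ℝ)^n) Filter.atTop (nhds 0) :=
        tendsto_pow_atTop_nhds_zero_of_lt_one (by norm_num) (by norm_num)
      have := h0.const_mul ℓ
      simpa using this
    have hWlim : Filter.Tendsto (fun n => |w t - w (qpt a ℓ n (J n))|) Filter.atTop
        (nhds (|w t - w v|)) :=
      (Filter.Tendsto.sub tendsto_const_nhds (hw.continuousAt.tendsto.comp hq)).abs
    apply le_of_tendsto hWlim
    apply Filter.Eventually.of_forall
    intro n
    calc |w t - w (qpt a ℓ n (J n))| ≤ ∑ m ∈ Finset.range (n+1), r/8*(3/4)^m :=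
          chain_dyadic hat hinc n (J n) (hJle n)
      _ ≤ r/2 := sum_geom_34 r hr _
lemma gauss_abs_tail (V : ℝ≥0) {r : ℝ} (hr : 0 < r) :
    (gaussianReal 0 V) {x : ℝ | r ≤ |x|} ≤ ENNReal.ofReal (2 * Real.exp (-(r^2) / (4*V))) := by
  have hsmeas : MeasurableSet {x : ℝ | r ≤ |x|} :=
    (isClosed_le continuous_const continuous_abs).measurableSet
  rcases eq_or_ne V 0 with hV | hV
  · subst hV
    rw [gaussianReal_zero_var, Measure.dirac_apply' _ hsmeas]
    have : (0:ℝ) ∉ {x : ℝ | r ≤ |x|} := by simp [abs_of_nonneg, hr.not_ge]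
    simp [Set.indicator_of_notMem this]
  · have hVpos : (0:ℝ) < V := lt_of_le_of_ne V.coe_nonneg (by exact_mod_cast hV.symm)
    rw [gaussianReal_apply 0 hV]
    set g : ℝ → ℝ := fun x => (√(2 * π * V))⁻¹ * Real.exp (-(r^2)/(4*V)) * Real.exp (-(1/(4*(V:ℝ))) * x^2) with hg
    have hgint : Integrable g := ((integrable_exp_neg_mul_sq (by positivity : (0:ℝ) < 1/(4*(V:ℝ)))).const_mul _)
    have hbound : ∀ x ∈ {x : ℝ | r ≤ |x|}, gaussianPDF 0 V x ≤ ENNReal.ofReal (g x) := by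
      intro x hx
      rw [gaussianPDF]
      apply ENNReal.ofReal_le_ofReal
      rw [gaussianPDFReal]
      have h1 : Real.exp (-(x - 0)^2 / (2*(V:ℝ))) ≤ Real.exp (-(r^2)/(4*V)) * Real.exp (-(1/(4*(V:ℝ))) * x^2) := by
        rw [← Real.exp_add]
        apply Real.exp_le_exp.2
        have hx2 : r^2 ≤ x^2 := by
          have := sq_abs x ▸ pow_le_pow_left₀ hr.le hx 2
          simpa [sq_abs] using this
        have h1 : r^2/(4*(V:ℝ)) ≤ x^2/(4*(V:ℝ)) := by gcongr
        have heq : -(x - 0)^2/(2*(V:ℝ)) = -(x^2/(4*(V:ℝ))) - x^2/(4*(V:ℝ)) := by ring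
        have heq2 : -(1/(4*(V:ℝ))) * x^2 = -(x^2/(4*(V:ℝ))) := by ring
        have heq3 : -(r^2)/(4*(V:ℝ)) = -(r^2/(4*(V:ℝ))) := by ring
        rw [heq, heq2, heq3]
        linarith
      calc (√(2 * π * V))⁻¹ * Real.exp (-(x - 0)^2 / (2*(V:ℝ)))
          ≤ (√(2 * π * V))⁻¹ * (Real.exp (-(r^2)/(4*V)) * Real.exp (-(1/(4*(V:ℝ))) * x^2)) := by
            apply mul_le_mul_of_nonneg_left h1 (by positivity)
        _ = g x := by rw [hg]; ring
    calc (∫⁻ x in {x : ℝ | r ≤ |x|}, gaussianPDF 0 V x)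
        ≤ ∫⁻ x in {x : ℝ | r ≤ |x|}, ENNReal.ofReal (g x) :=
          setLIntegral_mono' hsmeas hbound
      _ ≤ ∫⁻ x, ENNReal.ofReal (g x) := setLIntegral_le_lintegral _ _
      _ = ENNReal.ofReal (∫ x, g x) :=
          (ofReal_integral_eq_lintegral_ofReal hgint (ae_of_all _ (fun x => by positivity))).symm
      _ ≤ ENNReal.ofReal (2 * Real.exp (-(r^2) / (4*V))) := by
          apply ENNReal.ofReal_le_ofReal
          have hint : ∫ x : ℝ, Real.exp (-(1/(4*(V:ℝ))) * x^2) = √(π / (1/(4*(V:ℝ)))) :=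
            integral_gaussian _
          rw [hg]
          simp only [integral_const_mul]
          rw [hint]
          have h4 : π / (1/(4*(V:ℝ))) = 2 * (2 * π * V) := by field_simp; ring
          rw [h4, Real.sqrt_mul (by norm_num : (0:ℝ) ≤ 2)]
          have hs : (0:ℝ) < √(2 * π * V) := Real.sqrt_pos.2 (by positivity)
          rw [show (√(2 * π * ↑V))⁻¹ * rexp (-r ^ 2 / (4 * ↑V)) * (√2 * √(2 * π * ↑V))
              = (√(2 * π * ↑V))⁻¹ * √(2 * π * ↑V) * (√2 * rexp (-r ^ 2 / (4 * ↑V))) by ring,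
            inv_mul_cancel₀ hs.ne', one_mul]
          have : √2 ≤ 2 := by
            nlinarith [Real.sq_sqrt (show (0:ℝ) ≤ 2 by norm_num), Real.sqrt_nonneg 2]
          nlinarith [Real.exp_pos (-r ^ 2 / (4 * (V:ℝ)))]

lemma bm_tail {Ω : Type*} [MeasurableSpace Ω] (P : Measure Ω) (W : ℝ → Ω → ℝ)
    (hmeas : ∀ t, Measurable (W t))
    (hgauss : ∀ s t : ℝ, 0 ≤ s → s ≤ t →
      P.map (fun ω => W t ω - W s ω) = gaussianReal 0 (Real.toNNReal (t - s)))
    {v u V' r : ℝ} (hv : 0 ≤ v) (hvu : v ≤ u) (huV : u - v ≤ V') (hV : 0 < V') (hr : 0 < r) :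
    P {ω | r ≤ |W u ω - W v ω|} ≤ ENNReal.ofReal (2 * Real.exp (-(r^2)/(4*V'))) := by
  rcases eq_or_lt_of_le hvu with heq | hlt
  · subst heq
    have : {ω | r ≤ |W v ω - W v ω|} = (∅ : Set Ω) := by
      ext ω; simp [hr.not_ge]
    rw [this]
    simp
  · have hX : Measurable (fun ω => W u ω - W v ω) := (hmeas u).sub (hmeas v)
    have hsmeas : MeasurableSet {x : ℝ | r ≤ |x|} :=
      (isClosed_le continuous_const continuous_abs).measurableSet
    have hset : {ω | r ≤ |W u ω - W v ω|} = (fun ω => W u ω - W v ω) ⁻¹' {x | r ≤ |x|} := rfl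
    rw [hset, ← Measure.map_apply hX hsmeas, hgauss v u hv hvu]
    refine (gauss_abs_tail _ hr).trans (ENNReal.ofReal_le_ofReal ?_)
    have hc : ((Real.toNNReal (u - v) : ℝ≥0) : ℝ) = u - v := Real.coe_toNNReal _ (by linarith)
    rw [hc]
    have : -(r^2)/(4*(u-v)) ≤ -(r^2)/(4*V') := by
      rw [neg_div, neg_div, neg_le_neg_iff]
      exact div_le_div_of_nonneg_left (by positivity) (by linarith) (by linarith)
    nlinarith [Real.exp_le_exp.2 this, Real.exp_pos (-(r^2)/(4*(u-v)))]

lemma chain_bound {Ω : Type*} [MeasurableSpace Ω] (P : Measure Ω) [IsProbabilityMeasure P]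
    (W : ℝ → Ω → ℝ) (hmeas : ∀ t, Measurable (W t))
    (hgauss : ∀ s t : ℝ, 0 ≤ s → s ≤ t →
      P.map (fun ω => W t ω - W s ω) = gaussianReal 0 (Real.toNNReal (t - s)))
    (hcont : ∀ᵐ ω ∂P, Continuous fun u => W u ω)
    {a t h r : ℝ} (ha : 0 ≤ a) (hat : a ≤ t) (hht : t - a ≤ h) (hh : 0 < h) (hr : 0 < r)
    (hK : 8 * Real.log 4 ≤ r^2/(256*h)) :
    P {ω | ∃ v ∈ Set.Icc a t, r ≤ |W t ω - W v ω|}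
      ≤ ENNReal.ofReal (4 * Real.exp (-(r^2/(256*h)))) := by
  set K := r^2/(256*h) with hKdef
  have hKpos : 0 < K := by rw [hKdef]; positivity
  set A : ℕ → ℕ → Set Ω := fun n j =>
    {ω | r/8*(3/4)^n ≤ |W (qpt a (t-a) n (j+1)) ω - W (qpt a (t-a) n j) ω|} with hAdef
  set U : Set Ω := ⋃ n, ⋃ j ∈ Finset.range (2^n), A n j with hUdef
  have hsub : {ω | ∃ v ∈ Set.Icc a t, r ≤ |W t ω - W v ω|}
      ⊆ U ∪ {ω | ¬ Continuous fun u => W u ω} := by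
    intro ω hω
    obtain ⟨v, hv, hrv⟩ := hω
    by_cases hcω : Continuous fun u => W u ω
    · left
      by_contra hU
      simp only [hUdef, Set.mem_iUnion, not_exists, Finset.mem_range] at hU
      have hinc : ∀ n : ℕ, ∀ j < 2^n,
          |(fun u => W u ω) (qpt a (t-a) n (j+1)) - (fun u => W u ω) (qpt a (t-a) n j)|
            < r/8 * (3/4)^n := by
        intro n j hj
        have h1 := hU n j hj
        simp only [hAdef, Set.mem_setOf_eq, not_le] at h1
        exact h1
      have := chain_cont hcω hat hr.le hinc v hv
      linarith
    · exact Or.inr hcω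
  have hnull : P {ω | ¬ Continuous fun u => W u ω} = 0 := by
    rw [← ae_iff]
    exact hcont
  have hA : ∀ n : ℕ, ∀ j, P (A n j) ≤ ENNReal.ofReal (2 * Real.exp (-(K * (9/8)^n))) := by
    intro n j
    have h2n : (0:ℝ) < 2^n := by positivity
    have hq0 : (0:ℝ) ≤ qpt a (t-a) n j := by
      rw [qpt]
      have : (0:ℝ) ≤ (t-a) * j / 2^n :=
        div_nonneg (mul_nonneg (by linarith) (by positivity)) h2n.le
      linarith
    have hdiff : qpt a (t-a) n (j+1) - qpt a (t-a) n j = (t-a)/2^n := by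
      rw [qpt, qpt]
      push_cast
      field_simp
      ring
    have hqle : qpt a (t-a) n j ≤ qpt a (t-a) n (j+1) := by
      have h1 : (0:ℝ) ≤ (t-a)/2^n := div_nonneg (by linarith) h2n.le
      linarith [hdiff]
    have huV : qpt a (t-a) n (j+1) - qpt a (t-a) n j ≤ h/2^n := by
      rw [hdiff]
      gcongr
    have hrn : (0:ℝ) < r/8*(3/4)^n := by positivity
    refine (bm_tail P W hmeas hgauss hq0 hqle huV (by positivity) hrn).trans ?_
    apply ENNReal.ofReal_le_ofReal
    have hpow : ((3/4:ℝ)^n)^2 * 2^n = (9/8)^n := by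
      calc ((3/4:ℝ)^n)^2 * 2^n = ((3/4:ℝ)^2)^n * 2^n := by
            rw [← pow_mul, ← pow_mul, Nat.mul_comm n 2]
        _ = (9/16:ℝ)^n * 2^n := by norm_num
        _ = ((9/16:ℝ) * 2)^n := (mul_pow _ _ _).symm
        _ = (9/8:ℝ)^n := by norm_num
    have hexp : (r/8*(3/4)^n)^2/(4*(h/2^n)) = K * (9/8)^n := by
      rw [hKdef, ← hpow]
      field_simp
      ring
    rw [neg_div, hexp]
  -- sum up
  have hUb : P U ≤ ENNReal.ofReal (4 * Real.exp (-K)) := by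
    have step1 : P U ≤ ∑' n : ℕ, P (⋃ j ∈ Finset.range (2^n), A n j) := measure_iUnion_le _
    have step2 : ∀ n : ℕ, P (⋃ j ∈ Finset.range (2^n), A n j)
        ≤ (2^n : ℝ≥0∞) * ENNReal.ofReal (2 * Real.exp (-(K * (9/8)^n))) := by
      intro n
      refine (measure_biUnion_finset_le _ _).trans ?_
      calc ∑ j ∈ Finset.range (2^n), P (A n j)
          ≤ ∑ _j ∈ Finset.range (2^n), ENNReal.ofReal (2 * Real.exp (-(K * (9/8)^n))) :=
            Finset.sum_le_sum (fun j _ => hA n j)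
        _ = (2^n : ℕ) • ENNReal.ofReal (2 * Real.exp (-(K * (9/8)^n))) := by
            rw [Finset.sum_const, Finset.card_range]
        _ = (2^n : ℝ≥0∞) * ENNReal.ofReal (2 * Real.exp (-(K * (9/8)^n))) := by
            rw [nsmul_eq_mul]
            push_cast
            ring
    have step3 : ∀ n : ℕ, (2^n : ℝ≥0∞) * ENNReal.ofReal (2 * Real.exp (-(K * (9/8)^n)))
        ≤ ENNReal.ofReal (2 * Real.exp (-K)) * (ENNReal.ofReal (1/2))^n := by
      intro n
      have h2e : (2:ℝ≥0∞)^n = ENNReal.ofReal ((2:ℝ)^n) := by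
        rw [ENNReal.ofReal_pow (by norm_num)]
        norm_num
      rw [h2e, ← ENNReal.ofReal_mul (by positivity), ← ENNReal.ofReal_pow (by norm_num),
        ← ENNReal.ofReal_mul (by positivity)]
      apply ENNReal.ofReal_le_ofReal
      have hb : 1 + (n:ℝ)*(1/8) ≤ (9/8:ℝ)^n := by
        have := one_add_mul_le_pow (a := (1/8:ℝ)) (by norm_num) n
        calc 1 + (n:ℝ)*(1/8) = 1 + (n:ℝ)*(1/8) := rfl
          _ ≤ (1 + 1/8:ℝ)^n := this
          _ = (9/8:ℝ)^n := by norm_num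
      have he1 : Real.exp (-(K * (9/8)^n)) ≤ Real.exp (-K) * Real.exp (-(K*n/8)) := by
        rw [← Real.exp_add]
        apply Real.exp_le_exp.2
        nlinarith
      have he2 : (2:ℝ)^n * Real.exp (-(K*(n:ℝ)/8)) ≤ (1/2:ℝ)^n := by
        have hbase : (2:ℝ) * Real.exp (-(K/8)) ≤ 1/2 := by
          have h4 : Real.exp (-(K/8)) ≤ 1/4 := by
            have hlog : Real.exp (-(Real.log 4)) = 1/4 := by
              rw [Real.exp_neg, Real.exp_log (by norm_num : (0:ℝ) < 4)]
              norm_num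
            calc Real.exp (-(K/8)) ≤ Real.exp (-(Real.log 4)) :=
                  Real.exp_le_exp.2 (by linarith)
              _ = 1/4 := hlog
          linarith
        have heq : (2:ℝ)^n * Real.exp (-(K*(n:ℝ)/8)) = ((2:ℝ) * Real.exp (-(K/8)))^n := by
          rw [mul_pow, ← Real.exp_nat_mul]
          ring_nf
        rw [heq]
        exact pow_le_pow_left₀ (by positivity) hbase n
      calc (2:ℝ)^n * (2 * Real.exp (-(K * (9/8)^n)))
          ≤ (2:ℝ)^n * (2 * (Real.exp (-K) * Real.exp (-(K*n/8)))) := by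
            have h2n : (0:ℝ) < 2^n := by positivity
            nlinarith [Real.exp_pos (-(K * (9/8:ℝ)^n))]
        _ = (2 * Real.exp (-K)) * ((2:ℝ)^n * Real.exp (-(K*(n:ℝ)/8))) := by ring
        _ ≤ (2 * Real.exp (-K)) * (1/2:ℝ)^n := by
            apply mul_le_mul_of_nonneg_left he2 (by positivity)
    have hgeo : ∑' n : ℕ, ENNReal.ofReal (2 * Real.exp (-K)) * (ENNReal.ofReal (1/2))^n
        = ENNReal.ofReal (4 * Real.exp (-K)) := by
      rw [ENNReal.tsum_mul_left, ENNReal.tsum_geometric]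
      have h12 : ENNReal.ofReal (1/2) = (2:ℝ≥0∞)⁻¹ := by
        rw [show (1/2:ℝ) = (2:ℝ)⁻¹ by norm_num, ENNReal.ofReal_inv_of_pos (by norm_num)]
        norm_num
      rw [h12, ENNReal.one_sub_inv_two, inv_inv,
        show (2:ℝ≥0∞) = ENNReal.ofReal 2 by norm_num,
        ← ENNReal.ofReal_mul (by positivity)]
      congr 1
      ring
    calc P U ≤ ∑' n : ℕ, P (⋃ j ∈ Finset.range (2^n), A n j) := step1
      _ ≤ ∑' n : ℕ, ENNReal.ofReal (2 * Real.exp (-K)) * (ENNReal.ofReal (1/2))^n :=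
        ENNReal.tsum_le_tsum (fun n => (step2 n).trans (step3 n))
      _ = ENNReal.ofReal (4 * Real.exp (-K)) := hgeo
  calc P {ω | ∃ v ∈ Set.Icc a t, r ≤ |W t ω - W v ω|}
      ≤ P (U ∪ {ω | ¬ Continuous fun u => W u ω}) := measure_mono hsub
    _ ≤ P U + P {ω | ¬ Continuous fun u => W u ω} := measure_union_le _ _
    _ = P U := by rw [hnull, add_zero]
    _ ≤ ENNReal.ofReal (4 * Real.exp (-K)) := hUb

end Chaining

section Aux

variable {Ω : Type*}

lemma Keq_aux {α C₁ δ L : ℝ} (hδ : δ ≠ 0) (hL : L ≠ 0) (hC : C₁ ≠ 0) :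
    (α*(δ*L^4)/(4*C₁))^2/(256*(δ^2*L^4)) = α^2/(4096*C₁^2)*L^4 := by
  field_simp
  ring

lemma log_one_div_pos {δ : ℝ} (h0 : 0 < δ) (h1 : δ < 1) : 0 < Real.log (1/δ) :=
  Real.log_pos (one_lt_one_div h0 h1)

/-- minimal step size -/
noncomputable def minStep (δ : ℝ) : ℝ := min δ (δ^2 * (Real.log (1/δ))^4)

lemma minStep_pos {δ : ℝ} (h0 : 0 < δ) (h1 : δ < 1) : 0 < minStep δ := by
  have hL := log_one_div_pos h0 h1
  apply lt_min h0 (by positivity)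

lemma eps2_pos {δ : ℝ} (h0 : 0 < δ) (h1 : δ < 1) : 0 < eps2 δ := by
  have hL := log_one_div_pos h0 h1
  rw [eps2]; positivity

lemma minStep_le_stepSize (Θ : Set ℝ) {δ : ℝ} (h0 : 0 < δ) (h1 : δ < 1) (x : ℝ) :
    minStep δ ≤ stepSize Θ δ x := by
  have hL := log_one_div_pos h0 h1
  rw [stepSize]
  split_ifs with hc1 hc2
  · exact min_le_right _ _
  · refine (min_le_right _ _).trans ?_
    have hd : eps2 δ ≤ Metric.infDist x Θ := not_lt.1 hc1
    have h1' : eps2 δ / (Real.log (1/δ))^2 ≤ Metric.infDist x Θ / (Real.log (1/δ))^2 := by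
      gcongr
    have h2' : (eps2 δ / (Real.log (1/δ))^2)^2
        ≤ (Metric.infDist x Θ / (Real.log (1/δ))^2)^2 := by
      apply pow_le_pow_left₀ _ h1'
      have := eps2_pos h0 h1
      positivity
    have h3 : (eps2 δ / (Real.log (1/δ))^2)^2 = δ^2 * (Real.log (1/δ))^4 := by
      rw [eps2]
      field_simp
    linarith
  · exact min_le_left _ _

lemma stepSize_pos (Θ : Set ℝ) {δ : ℝ} (h0 : 0 < δ) (h1 : δ < 1) (x : ℝ) :
    0 < stepSize Θ δ x :=
  lt_of_lt_of_le (minStep_pos h0 h1) (minStep_le_stepSize Θ h0 h1 x)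

variable (b s : ℝ → ℝ) (Θ : Set ℝ) (x₀ : ℝ) (W : ℝ → Ω → ℝ)

lemma gridTime_zero (δ : ℝ) (ω : Ω) : gridTime b s Θ x₀ W δ 0 ω = 0 := rfl

lemma gridTime_succ (δ : ℝ) (i : ℕ) (ω : Ω) :
    gridTime b s Θ x₀ W δ (i+1) ω
      = gridTime b s Θ x₀ W δ i ω + stepSize Θ δ (gridVal b s Θ x₀ W δ i ω) := rfl

lemma le_gridTime {δ : ℝ} (h0 : 0 < δ) (h1 : δ < 1) (i : ℕ) (ω : Ω) :
    (i : ℝ) * minStep δ ≤ gridTime b s Θ x₀ W δ i ω := by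
  induction i with
  | zero => simp [gridTime_zero]
  | succ i ih =>
    rw [gridTime_succ]
    push_cast
    have := minStep_le_stepSize Θ h0 h1 (gridVal b s Θ x₀ W δ i ω)
    linarith

lemma gridTime_nonneg {δ : ℝ} (h0 : 0 < δ) (h1 : δ < 1) (i : ℕ) (ω : Ω) :
    0 ≤ gridTime b s Θ x₀ W δ i ω := by
  have := le_gridTime b s Θ x₀ W h0 h1 i ω
  have hm := (minStep_pos h0 h1).le
  nlinarith [Nat.cast_nonneg (α := ℝ) i]

lemma lastIdx_spec {δ : ℝ} (h0 : 0 < δ) (h1 : δ < 1) {t : ℝ} (ht : 0 ≤ t) (ω : Ω) :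
    lastTime b s Θ x₀ W δ t ω ≤ t ∧
      t < lastTime b s Θ x₀ W δ t ω + stepSize Θ δ (lastVal b s Θ x₀ W δ t ω) := by
  set S := {i : ℕ | gridTime b s Θ x₀ W δ i ω ≤ t} with hS
  have h0S : 0 ∈ S := by simp [hS, gridTime_zero, ht]
  have hm := minStep_pos h0 h1
  have hbdd : BddAbove S := by
    refine ⟨⌈t / minStep δ⌉₊, fun i hi => ?_⟩
    have h1' : (i : ℝ) * minStep δ ≤ t := le_trans (le_gridTime b s Θ x₀ W h0 h1 i ω) hi
    have h2' : (i : ℝ) ≤ t / minStep δ := by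
      rw [le_div_iff₀ hm]
      exact h1'
    exact_mod_cast h2'.trans (Nat.le_ceil _)
  have hmem : sSup S ∈ S := Nat.sSup_mem ⟨0, h0S⟩ hbdd
  have hnot : sSup S + 1 ∉ S := by
    intro h
    exact (Nat.lt_succ_self (sSup S)).not_ge (le_csSup hbdd h)
  constructor
  · exact hmem
  · have hlt : t < gridTime b s Θ x₀ W δ (sSup S + 1) ω := by
      by_contra hcon
      exact hnot (not_lt.1 hcon)
    calc t < gridTime b s Θ x₀ W δ (sSup S + 1) ω := hlt
      _ = _ := gridTime_succ b s Θ x₀ W δ _ ω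

end Aux

set_option maxHeartbeats 1000000 in
/-- Lemma 5.5(i): probability that the increment exceeds `α·ε₂^δ` while
`X̂^δ_(t̲^δ) ∈ Θ^(ε₂^δ)` is of order `δ^q`. -/
theorem scheme_large_increment_eps2
    {Ω : Type*} [MeasurableSpace Ω] (P : Measure Ω) [IsProbabilityMeasure P]
    (W : ℝ → Ω → ℝ) (hW : IsBrownianMotion P W)
    (b s : ℝ → ℝ) (k : ℕ) (hk : 0 < k) (ξ : Fin k → ℝ) (hξ : StrictMono ξ)
    (hb1 : PiecewiseLipschitz ξ b) (hb2 : PiecewiseC1Lipschitz ξ b)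
    (hs1 : ∃ L : ℝ≥0, LipschitzWith L s) (hs0 : ∀ i, s (ξ i) ≠ 0)
    (hs2 : PiecewiseC1Lipschitz ξ s)
    (x₀ : ℝ) (hbC : Continuous b)
    (ε₀ : ℝ) (hε₀ : ε₀ ∈ Set.Ioc (0 : ℝ) 1)
    (hgap : ∀ i j : Fin k, (i : ℕ) + 1 = (j : ℕ) → ε₀ ≤ (ξ j - ξ i) / 2)
    (δ₀ : ℝ) (hδ₀ : δ₀ ∈ Set.Ioo (0 : ℝ) 1)
    (hδ₀' : ∀ δ ∈ Set.Ioc (0 : ℝ) δ₀, eps2 δ ≤ eps1 δ ∧ eps1 δ ≤ ε₀ / 2)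
    (α : ℝ) (hα : 0 < α) (q : ℝ) (hq : 1 ≤ q) :
    ∃ c : ℝ, 0 < c ∧ ∀ δ ∈ Set.Ioc (0 : ℝ) δ₀, ∀ t ∈ Set.Icc (0 : ℝ) 1,
      P {ω | α * eps2 δ ≤ |lastVal b s (Set.range ξ) x₀ W δ t ω - scheme b s (Set.range ξ) x₀ W δ t ω| ∧
          Metric.infDist (lastVal b s (Set.range ξ) x₀ W δ t ω) (Set.range ξ) < eps2 δ}
        ≤ ENNReal.ofReal (c * δ ^ q) := by
  -- basic constants
  have hδ₀pos : 0 < δ₀ := hδ₀.1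
  have hδ₀lt1 : δ₀ < 1 := hδ₀.2
  have hkne : Nonempty (Fin k) := ⟨⟨0, hk⟩⟩
  obtain ⟨Ls, hLs⟩ := hs1
  -- bound on the ξ i
  obtain ⟨M, hM⟩ := (Set.finite_range fun i => |ξ i|).bddAbove
  have hM' : ∀ i, |ξ i| ≤ M := fun i => hM (Set.mem_range_self i)
  have hM0 : 0 ≤ M := le_trans (abs_nonneg _) (hM' ⟨0, hk⟩)
  set R := M + 1 with hRdef
  -- bound for b on [-R, R]
  obtain ⟨Cb, hCb⟩ := (isCompact_Icc (a := -R) (b := R)).exists_bound_of_continuousOn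
    hbC.continuousOn
  -- bound for s on [-R, R]
  set Sb := |s 0| + (Ls : ℝ) * R with hSbdef
  have hSb : ∀ y : ℝ, |y| ≤ R → |s y| ≤ Sb := by
    intro y hy
    have h1 : |s y - s 0| ≤ (Ls : ℝ) * |y - 0| := by
      have := hLs.dist_le_mul y 0
      simpa [Real.dist_eq] using this
    have h2 : |s y| - |s 0| ≤ |s y - s 0| := abs_sub_abs_le_abs_sub _ _
    rw [hSbdef]
    have h3 : (Ls : ℝ) * |y| ≤ (Ls : ℝ) * R :=
      mul_le_mul_of_nonneg_left hy Ls.coe_nonneg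
    simp only [sub_zero] at h1
    linarith
  have hderiv : ∀ y : ℝ, |deriv s y| ≤ (Ls : ℝ) := by
    intro y
    have := norm_deriv_le_of_lipschitz (𝕜 := ℝ) hLs (x₀ := y)
    simpa using this
  set C₁ := max 1 (max Cb (max Sb (Sb * Ls))) with hC₁def
  have hC₁1 : (1:ℝ) ≤ C₁ := le_max_left _ _
  have hC₁pos : (0:ℝ) < C₁ := lt_of_lt_of_le one_pos hC₁1
  have hC₁b : ∀ y : ℝ, |y| ≤ R → |b y| ≤ C₁ := by
    intro y hy
    refine le_trans (hCb y ?_) (le_trans (le_max_left _ _) (le_max_right _ _))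
    constructor <;> [linarith [abs_nonneg y, neg_le_of_abs_le hy]; exact le_of_abs_le hy]
  have hC₁s : ∀ y : ℝ, |y| ≤ R → |s y| ≤ C₁ :=
    fun y hy => le_trans (hSb y hy)
      (le_trans (le_trans (le_max_left _ _) (le_max_right _ _)) (le_max_right _ _))
  have hSb0 : 0 ≤ Sb := by rw [hSbdef]; positivity
  have hC₁sd : ∀ y : ℝ, |y| ≤ R → |s y * deriv s y| ≤ C₁ := by
    intro y hy
    rw [abs_mul]
    refine le_trans (mul_le_mul (hSb y hy) (hderiv y) (abs_nonneg _) hSb0) ?_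
    exact le_trans (le_trans (le_max_right _ _) (le_max_right _ _)) (le_max_right _ _)
  -- exponential constants
  set c₄ := α^2/(4096*C₁^2) with hc₄def
  have hc₄pos : 0 < c₄ := by rw [hc₄def]; positivity
  have hlog4 : (0:ℝ) < Real.log 4 := Real.log_pos (by norm_num)
  set T := max (max 1 ((q + 9*Real.log 4)/c₄ + 1)) (2 * Real.log (1024*α/C₁)) with hTdef
  have hT1 : (1:ℝ) ≤ T := le_trans (le_max_left _ _) (le_max_left _ _)
  have hTq : (q + 9*Real.log 4)/c₄ + 1 ≤ T := le_trans (le_max_right _ _) (le_max_left _ _)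
  have hTlog : 2 * Real.log (1024*α/C₁) ≤ T := le_max_right _ _
  set δ₁ := min δ₀ (min (α/(3*C₁)) (Real.exp (-T))) with hδ₁def
  have hδ₁pos : 0 < δ₁ := by
    rw [hδ₁def]
    exact lt_min hδ₀pos (lt_min (by positivity) (Real.exp_pos _))
  set c := 1 + δ₁ ^ (-q) with hcdef
  have hδ₁q : 0 < δ₁ ^ (-q) := Real.rpow_pos_of_pos hδ₁pos _
  have hcpos : 0 < c := by rw [hcdef]; linarith
  have hc1 : 1 ≤ c := by rw [hcdef]; linarith
  refine ⟨c, hcpos, ?_⟩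
  intro δ hδ t ht
  have h0 : 0 < δ := hδ.1
  have h1 : δ < 1 := lt_of_le_of_lt hδ.2 hδ₀lt1
  have hL : 0 < Real.log (1/δ) := log_one_div_pos h0 h1
  set L := Real.log (1/δ) with hLdef
  have hε₂pos : 0 < eps2 δ := eps2_pos h0 h1
  have hε₂eq : eps2 δ = δ * L^4 := by rw [eps2, hLdef]
  have hε₂le : eps2 δ ≤ eps1 δ ∧ eps1 δ ≤ ε₀/2 := hδ₀' δ hδ
  have hε₂1 : eps2 δ ≤ 1 := le_trans hε₂le.1 (le_trans hε₂le.2 (by linarith [hε₀.2]))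
  set Θ := Set.range ξ with hΘdef
  -- the case of large δ
  by_cases hsmall : δ ≤ δ₁
  case neg =>
    push_neg at hsmall
    refine le_trans prob_le_one ?_
    rw [ENNReal.one_le_ofReal]
    have hq0 : (0:ℝ) ≤ q := by linarith
    have h2 : δ₁ ^ q ≤ δ ^ q := Real.rpow_le_rpow hδ₁pos.le hsmall.le hq0
    have h3 : δ₁ ^ (-q) * δ₁ ^ q = 1 := by
      rw [← Real.rpow_add hδ₁pos]
      simp
    have h4 : (0:ℝ) < δ ^ q := Real.rpow_pos_of_pos h0 _
    have h5 : 1 ≤ δ₁ ^ (-q) * δ ^ q := by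
      calc (1:ℝ) = δ₁ ^ (-q) * δ₁ ^ q := h3.symm
        _ ≤ δ₁ ^ (-q) * δ ^ q := mul_le_mul_of_nonneg_left h2 hδ₁q.le
    rw [hcdef]
    have h6 : (1 + δ₁ ^ (-q)) * δ ^ q = δ ^ q + δ₁ ^ (-q) * δ ^ q := by ring
    linarith
  case pos =>
    have hδα : δ ≤ α/(3*C₁) := le_trans hsmall (le_trans (min_le_right _ _) (min_le_left _ _))
    have hδT : δ ≤ Real.exp (-T) := le_trans hsmall (le_trans (min_le_right _ _) (min_le_right _ _))
    have hLT : T ≤ L := by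
      rw [hLdef]
      have h2 : Real.exp T ≤ 1/δ := by
        rw [le_div_iff₀ h0]
        calc Real.exp T * δ ≤ Real.exp T * Real.exp (-T) :=
              mul_le_mul_of_nonneg_left hδT (Real.exp_pos _).le
          _ = 1 := by rw [← Real.exp_add]; simp
      calc T = Real.log (Real.exp T) := (Real.log_exp T).symm
        _ ≤ Real.log (1/δ) := Real.log_le_log (Real.exp_pos _) h2
    have hL1 : 1 ≤ L := le_trans hT1 hLT
    -- r ≤ 1 preparation : α * eps2 δ ≤ 4 * C₁
    have hlogδ : Real.log δ = -L := by rw [hLdef, one_div, Real.log_inv, neg_neg]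
    have hδeq : δ = Real.exp (-L) := by rw [← hlogδ, Real.exp_log h0]
    have hL4 : L^4 ≤ 4096 * Real.exp (L/2) := by
      have h8 : 0 ≤ L/8 := by linarith
      have he : L/8 ≤ Real.exp (L/8) := by
        have := Real.add_one_le_exp (L/8)
        linarith
      have hp : (L/8)^4 ≤ (Real.exp (L/8))^4 := pow_le_pow_left₀ h8 he 4
      have hee : (Real.exp (L/8))^4 = Real.exp (L/2) := by
        rw [← Real.exp_nat_mul]
        congr 1
        push_cast
        ring
      rw [hee] at hp
      have hq4 : L^4 = 4096*(L/8)^4 := by ring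
      linarith
    have hr1 : α * eps2 δ ≤ 4 * C₁ := by
      have h2 : eps2 δ ≤ 4096 * Real.exp (-(L/2)) := by
        calc eps2 δ = δ * L^4 := hε₂eq
          _ ≤ δ * (4096 * Real.exp (L/2)) := by
              apply mul_le_mul_of_nonneg_left hL4 h0.le
          _ = 4096 * (Real.exp (-L) * Real.exp (L/2)) := by rw [hδeq]; ring
          _ = 4096 * Real.exp (-(L/2)) := by rw [← Real.exp_add]; ring_nf
      have h3 : Real.exp (-(L/2)) ≤ Real.exp (-(T/2)) :=
        Real.exp_le_exp.2 (by linarith)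
      have h4 : Real.exp (-(T/2)) ≤ C₁/(1024*α) := by
        have hx : (0:ℝ) < 1024*α/C₁ := by positivity
        have h5 : Real.log (1024*α/C₁) ≤ T/2 := by linarith
        calc Real.exp (-(T/2)) ≤ Real.exp (-(Real.log (1024*α/C₁))) :=
              Real.exp_le_exp.2 (by linarith)
          _ = (1024*α/C₁)⁻¹ := by rw [Real.exp_neg, Real.exp_log hx]
          _ = C₁/(1024*α) := by rw [inv_div]
      have h6 : eps2 δ ≤ 4096 * (C₁/(1024*α)) := by
        calc eps2 δ ≤ 4096 * Real.exp (-(L/2)) := h2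
          _ ≤ 4096 * Real.exp (-(T/2)) := by linarith
          _ ≤ 4096 * (C₁/(1024*α)) := by linarith
      have h7 : 4096 * (C₁/(1024*α)) = 4*C₁/α := by field_simp; ring
      rw [h7] at h6
      calc α * eps2 δ ≤ α * (4*C₁/α) := mul_le_mul_of_nonneg_left h6 hα.le
        _ = 4*C₁ := by field_simp
    -- set up chaining parameters
    set h := δ^2 * L^4 with hhdef
    have hh : 0 < h := by rw [hhdef]; positivity
    have hheq : h = δ * eps2 δ := by rw [hhdef, hε₂eq]; ring
    set a := max (t - h) 0 with hadef
    have ha : 0 ≤ a := le_max_right _ _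
    have hat : a ≤ t := max_le (by linarith) ht.1
    have hht : t - a ≤ h := by
      have := le_max_left (t - h) 0
      linarith
    set r := α * eps2 δ/(4*C₁) with hrdef
    have hrpos : 0 < r := by rw [hrdef]; positivity
    -- event inclusion
    have hsub : {ω | α * eps2 δ ≤ |lastVal b s Θ x₀ W δ t ω - scheme b s Θ x₀ W δ t ω| ∧
          Metric.infDist (lastVal b s Θ x₀ W δ t ω) Θ < eps2 δ}
        ⊆ {ω | ∃ v ∈ Set.Icc a t, r ≤ |W t ω - W v ω|} := by
      intro ω hω
      obtain ⟨hincr, hdist⟩ := hω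
      set y := lastVal b s Θ x₀ W δ t ω with hydef
      set u := lastTime b s Θ x₀ W δ t ω with hudef
      obtain ⟨hu1, hu2⟩ := lastIdx_spec b s Θ x₀ W h0 h1 ht.1 ω
      have hstep : stepSize Θ δ y = h := by rw [stepSize, if_pos hdist]
      rw [← hudef] at hu1 hu2
      rw [← hydef] at hu2
      have hu2' : t < u + h := by rw [← hstep]; exact hu2
      have hu0 : 0 ≤ u := gridTime_nonneg b s Θ x₀ W h0 h1 _ ω
      have hua : a ≤ u := max_le (by linarith) hu0
      have hscheme : scheme b s Θ x₀ W δ t ω = milsteinStep b s y u t (fun v => W v ω) := rfl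
      set ΔW := W t ω - W u ω with hΔWdef
      set Δt := t - u with hΔtdef
      have hΔt0 : 0 ≤ Δt := by rw [hΔtdef]; linarith
      have hΔth : Δt ≤ h := by rw [hΔtdef]; linarith
      have hexp : y - scheme b s Θ x₀ W δ t ω
          = -(b y * Δt + s y * ΔW + (1/2)*(s y * deriv s y)*(ΔW^2 - Δt)) := by
        rw [hscheme, milsteinStep]
        ring
      -- |y| ≤ R
      have hne : Θ.Nonempty := Set.range_nonempty ξ
      obtain ⟨z, hz, hdz⟩ := (Metric.infDist_lt_iff hne).1 hdist
      obtain ⟨i, rfl⟩ := hz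
      have hyR : |y| ≤ R := by
        have ha1 : |y - ξ i| < eps2 δ := by rwa [Real.dist_eq] at hdz
        have ha2 := hM' i
        have ha3 : |y| ≤ |y - ξ i| + |ξ i| := by
          calc |y| = |(y - ξ i) + ξ i| := by ring_nf
            _ ≤ |y - ξ i| + |ξ i| := abs_add_le _ _
        rw [hRdef]
        linarith
      -- main estimate
      have habs1 : |b y * Δt| ≤ C₁ * Δt := by
        rw [abs_mul, abs_of_nonneg hΔt0]
        exact mul_le_mul_of_nonneg_right (hC₁b y hyR) hΔt0
      have habs2 : |s y * ΔW| ≤ C₁ * |ΔW| := by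
        rw [abs_mul]
        exact mul_le_mul_of_nonneg_right (hC₁s y hyR) (abs_nonneg _)
      have habs3 : |(1/2)*(s y * deriv s y)*(ΔW^2 - Δt)| ≤ (1/2)*C₁*(ΔW^2 + Δt) := by
        rw [abs_mul, abs_mul]
        have hb1 : |ΔW^2 - Δt| ≤ ΔW^2 + Δt := by
          refine (abs_sub _ _).trans ?_
          rw [abs_of_nonneg (sq_nonneg _), abs_of_nonneg hΔt0]
        have hb2 : |(1/2:ℝ)| = 1/2 := by norm_num
        rw [hb2]
        have hb4 := mul_le_mul (mul_le_mul_of_nonneg_left (hC₁sd y hyR)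
          (by norm_num : (0:ℝ) ≤ 1/2)) hb1 (abs_nonneg _) (by positivity)
        calc 1/2 * |s y * deriv s y| * |ΔW^2 - Δt| ≤ 1/2 * C₁ * (ΔW^2 + Δt) := hb4
          _ = (1/2)*C₁*(ΔW^2 + Δt) := by ring
      have htri : α * eps2 δ ≤ C₁ * Δt + C₁ * |ΔW| + (1/2)*C₁*(ΔW^2 + Δt) := by
        calc α * eps2 δ ≤ |y - scheme b s Θ x₀ W δ t ω| := hincr
          _ = |b y * Δt + s y * ΔW + (1/2)*(s y * deriv s y)*(ΔW^2 - Δt)| := by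
              rw [hexp, abs_neg]
          _ ≤ |b y * Δt + s y * ΔW| + |(1/2)*(s y * deriv s y)*(ΔW^2 - Δt)| := abs_add_le _ _
          _ ≤ |b y * Δt| + |s y * ΔW| + |(1/2)*(s y * deriv s y)*(ΔW^2 - Δt)| := by
              linarith [abs_add_le (b y * Δt) (s y * ΔW)]
          _ ≤ C₁ * Δt + C₁ * |ΔW| + (1/2)*C₁*(ΔW^2 + Δt) :=
              add_le_add (add_le_add habs1 habs2) habs3
      have hkey : α/2 * eps2 δ ≤ C₁ * |ΔW| + (1/2)*C₁*ΔW^2 := by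
        have hd1 : (3/2)*C₁*Δt ≤ (3/2)*C₁*(δ * eps2 δ) := by
          have h11 : Δt ≤ δ * eps2 δ := hheq ▸ hΔth
          exact mul_le_mul_of_nonneg_left h11 (by positivity)
        have hd2 : 3*C₁*δ ≤ α := by
          rw [le_div_iff₀ (by positivity : (0:ℝ) < 3*C₁)] at hδα
          linarith [hδα]
        have hd3 : (3/2)*C₁*(δ * eps2 δ) ≤ α/2 * eps2 δ := by
          have h12 := mul_le_mul_of_nonneg_right hd2 hε₂pos.le
          have h13 : (3/2)*C₁*(δ * eps2 δ) = 1/2*(3*C₁*δ*eps2 δ) := by ring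
          have h14 : α/2 * eps2 δ = 1/2*(α * eps2 δ) := by ring
          rw [h13, h14]
          linarith
        linarith
      have hΔWr : r ≤ |ΔW| := by
        rcases le_or_gt |ΔW| 1 with hcase | hcase
        · have hsq : ΔW^2 ≤ |ΔW| := by
            calc ΔW^2 = abs ΔW^2 := (sq_abs _).symm
              _ = abs ΔW * abs ΔW := pow_two (abs ΔW)
              _ ≤ 1 * abs ΔW := mul_le_mul_of_nonneg_right hcase (abs_nonneg _)
              _ = abs ΔW := one_mul _
          have hd4 : α/2 * eps2 δ ≤ (3/2)*C₁*|ΔW| := by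
            have h15 : (1/2)*C₁*ΔW^2 ≤ (1/2)*C₁*|ΔW| :=
              mul_le_mul_of_nonneg_left hsq (by positivity)
            have h16 : C₁*|ΔW| + (1/2)*C₁*|ΔW| = (3/2)*C₁*|ΔW| := by ring
            linarith
          rw [hrdef, div_le_iff₀ (by positivity : (0:ℝ) < 4*C₁)]
          have h17 : 0 ≤ C₁ * |ΔW| := mul_nonneg hC₁pos.le (abs_nonneg _)
          have h18 : |ΔW| *(4*C₁) = 4*(C₁*|ΔW|) := by ring
          have h19 : (3/2)*C₁*|ΔW| = (3/2)*(C₁*|ΔW|) := by ring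
          rw [h18]
          rw [h19] at hd4
          linarith
        · have hd5 : r ≤ 1 := by
            rw [hrdef, div_le_one (by positivity : (0:ℝ) < 4*C₁)]
            linarith
          linarith
      exact ⟨u, ⟨hua, hu1⟩, hΔWr⟩
    -- exponent computation
    have hKeq : r^2/(256*h) = c₄ * L^4 := by
      rw [hrdef, hhdef, hε₂eq, hc₄def]
      exact Keq_aux (ne_of_gt h0) (ne_of_gt hL) (ne_of_gt hC₁pos)
    have h4T : q + 9*Real.log 4 ≤ c₄ * T := by
      have hmul := mul_le_mul_of_nonneg_left hTq hc₄pos.le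
      have heq2 : c₄ * ((q + 9*Real.log 4)/c₄ + 1) = q + 9*Real.log 4 + c₄ := by
        field_simp
      rw [heq2] at hmul
      linarith
    have hmain : q*L + 9*Real.log 4 ≤ c₄ * L^4 := by
      have h3 : T^3 ≤ L^3 := pow_le_pow_left₀ (by linarith) hLT 3
      have hTT : T ≤ T^3 := le_self_pow₀ (by linarith) (by norm_num)
      have hq0 : (0:ℝ) < q := by linarith
      have hL0 : (0:ℝ) ≤ L := by linarith
      have p1 : (q + 9*Real.log 4)*L ≤ c₄*T*L := mul_le_mul_of_nonneg_right h4T hL0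
      have p2 : c₄*T*L ≤ c₄*T^3*L :=
        mul_le_mul_of_nonneg_right (mul_le_mul_of_nonneg_left hTT hc₄pos.le) hL0
      have p3 : c₄*T^3*L ≤ c₄*L^3*L := by
        have := mul_le_mul_of_nonneg_left (mul_le_mul_of_nonneg_right h3 hL0) hc₄pos.le
        calc c₄*T^3*L = c₄*(T^3*L) := by ring
          _ ≤ c₄*(L^3*L) := this
          _ = c₄*L^3*L := by ring
      have p4 : q*L + 9*Real.log 4 ≤ (q + 9*Real.log 4)*L := by
        have h20 : (0:ℝ) ≤ 9*Real.log 4 * (L - 1) :=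
          mul_nonneg (by positivity) (by linarith)
        have h21 : (q + 9*Real.log 4)*L = q*L + 9*Real.log 4 + 9*Real.log 4*(L-1) := by ring
        linarith
      have p5 : c₄*L^3*L = c₄*L^4 := by ring
      linarith
    have hK : 8 * Real.log 4 ≤ r^2/(256*h) := by
      rw [hKeq]
      have : (0:ℝ) ≤ q*L := by positivity
      linarith
    have hchain := chain_bound P W hW.meas hW.gauss hW.cont ha hat hht hh hrpos hK
    refine le_trans (measure_mono hsub) (le_trans hchain ?_)
    apply ENNReal.ofReal_le_ofReal
    have hfin1 : 4 * Real.exp (-(r^2/(256*h))) ≤ δ ^ q := by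
      rw [hKeq]
      have he1 : 4 * Real.exp (-(c₄ * L^4)) = Real.exp (Real.log 4 + -(c₄ * L^4)) := by
        rw [Real.exp_add, Real.exp_log (by norm_num : (0:ℝ) < 4)]
      have he2 : δ ^ q = Real.exp (-(q * L)) := by
        rw [Real.rpow_def_of_pos h0, hlogδ]
        ring_nf
      rw [he1, he2]
      apply Real.exp_le_exp.2
      linarith
    have hd : (0:ℝ) < δ ^ q := Real.rpow_pos_of_pos h0 _
    calc 4 * Real.exp (-(r^2/(256*h))) ≤ δ ^ q := hfin1
      _ ≤ c * δ ^ q := by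
        have := mul_le_mul_of_nonneg_right hc1 hd.le
        linarith


end AdaptiveQM
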